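/- For every positive integer n, the minimum cardinality of an odd cover of the path P_n on n vertices is ⌊n/2⌋; that is, b₂(P_n) = n/2 if n is even and b₂(P_n) = (n-1)/2 if n is odd. -/

import Mathlib

open scoped Classical

/-- A list of bicliques `B 0, …, B (k-1)` (each given by a pair of disjoint
vertex subsets) is an *odd cover* of `G` if two distinct vertices are adjacent
in `G` exactly when they lie in opposite parts of an odd number of the bicliques. -/
def IsOddCover {V : Type*} [Fintype V] (G : SimpleGraph V) {k : ℕ}
    (B : Fin k → Finset V × Finset V) : Prop :=
  (∀ i, Disjoint (B i).1 (B i).2) ∧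
  ∀ u v : V, u ≠ v →
    (G.Adj u v ↔ Odd (Finset.univ.filter (fun i : Fin k =>
      (u ∈ (B i).1 ∧ v ∈ (B i).2) ∨ (u ∈ (B i).2 ∧ v ∈ (B i).1))).card)

/-- `b2 G` is the minimum cardinality of an odd cover of `G`. -/
noncomputable def b2 {V : Type*} [Fintype V] (G : SimpleGraph V) : ℕ :=
  sInf {k : ℕ | ∃ B : Fin k → Finset V × Finset V, IsOddCover G B}

/-- `r2 G` is the rank of the adjacency matrix of `G` over `𝔽₂`. -/
noncomputable def r2 {V : Type*} [Fintype V] (G : SimpleGraph V) : ℕ :=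
  (Matrix.of fun u v : V => if G.Adj u v then (1 : ZMod 2) else 0).rank


/-- The path graph on `n` vertices `0,1,…,n-1`, with `i` adjacent to `j`
iff `|i - j| = 1`. -/
def pathGraphN (n : ℕ) : SimpleGraph (Fin n) :=
  SimpleGraph.fromRel (fun i j => i.val + 1 = j.val)

/-! ### Auxiliary lemmas -/

open Matrix Module

lemma pathAdj {n : ℕ} (u v : Fin n) :
    (pathGraphN n).Adj u v ↔ ((u : ℕ) + 1 = (v : ℕ) ∨ (v : ℕ) + 1 = (u : ℕ)) := by
  rw [pathGraphN, SimpleGraph.fromRel_adj]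
  constructor
  · rintro ⟨-, h⟩; exact h
  · intro h
    refine ⟨Fin.ne_of_val_ne ?_, h⟩
    rcases h with h | h <;> omega


lemma myDecPredEq {ι : Type*} (p : ι → Prop) (h1 h2 : DecidablePred p) : h1 = h2 :=
  funext fun _ => Subsingleton.elim _ _

lemma myOddCardCongr {ι : Type*} (s : Finset ι) (p : ι → Prop) (h1 h2 : DecidablePred p) :
    Odd (@Finset.filter ι p h1 s).card ↔ Odd (@Finset.filter ι p h2 s).card := by
  rw [myDecPredEq p h1 h2]

lemma myBoole {ι : Type*} [Fintype ι] (P : Prop) [hPd : Decidable P] (p : ι → Prop)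
    (h1 h2 : DecidablePred p)
    (hiff : P ↔ Odd (@Finset.filter ι p h1 Finset.univ).card) :
    (∑ i : ι, @ite _ (p i) (h2 i) (1 : ZMod 2) 0) = if P then 1 else 0 := by
  obtain rfl : h1 = h2 := myDecPredEq p h1 h2
  have hc : (∑ i : ι, @ite _ (p i) (h1 i) (1 : ZMod 2) 0)
      = ((@Finset.filter ι p h1 Finset.univ).card : ZMod 2) := by
    rw [Finset.card_filter, Nat.cast_sum]
    exact Finset.sum_congr rfl fun i _ => by
      by_cases h : p i
      · rw [if_pos h, if_pos h, Nat.cast_one]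
      · rw [if_neg h, if_neg h, Nat.cast_zero]
  rw [hc]
  by_cases hP : P
  · rw [if_pos hP]
    have h := hiff.mp hP
    rw [Nat.odd_iff] at h
    rw [← ZMod.natCast_mod, h, Nat.cast_one]
  · rw [if_neg hP]
    have h : ¬ Odd (@Finset.filter ι p h1 Finset.univ).card := fun ho => hP (hiff.mpr ho)
    rw [Nat.not_odd_iff] at h
    rw [← ZMod.natCast_mod, h, Nat.cast_zero]

lemma myRankAddLe {N : ℕ} (A B : Matrix (Fin N) (Fin N) (ZMod 2)) :
    (A + B).rank ≤ A.rank + B.rank := by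
  have hr : LinearMap.range (A + B).mulVecLin ≤
      LinearMap.range A.mulVecLin ⊔ LinearMap.range B.mulVecLin := by
    rintro x ⟨y, rfl⟩
    have h : (A + B).mulVecLin y = A.mulVecLin y + B.mulVecLin y := by
      simp [Matrix.mulVecLin_apply, Matrix.add_mulVec]
    rw [h]
    exact Submodule.add_mem_sup (LinearMap.mem_range_self _ y) (LinearMap.mem_range_self _ y)
  exact le_trans (Submodule.finrank_mono hr)
    (Submodule.finrank_add_le_finrank_add_finrank _ _)

lemma myRankVecMulVecLe {N : ℕ} (w v : Fin N → ZMod 2) :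
    (Matrix.vecMulVec w v).rank ≤ 1 := by
  rw [Matrix.vecMulVec_eq (Fin 1)]
  exact le_trans (Matrix.rank_mul_le_left _ _)
    (le_trans (Matrix.rank_le_card_width _) (by simp))

lemma myRankSumLe {N : ℕ} {ι : Type*} (s : Finset ι) (f : ι → Matrix (Fin N) (Fin N) (ZMod 2)) :
    (∑ i ∈ s, f i).rank ≤ ∑ i ∈ s, (f i).rank := by
  induction s using Finset.cons_induction with
  | empty => simp
  | cons a s ha ih =>
    rw [Finset.sum_cons, Finset.sum_cons]
    exact le_trans (myRankAddLe _ _) (by gcongr)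

/-- Any odd cover of a graph on `Fin n` with `k` bicliques forces the `𝔽₂`-rank of the
adjacency matrix to be at most `2k`. -/
lemma rank_le_of_oddCover {n k : ℕ} (G : SimpleGraph (Fin n))
    (B : Fin k → Finset (Fin n) × Finset (Fin n)) (hB : IsOddCover G B) :
    (Matrix.of fun u v : Fin n => if G.Adj u v then (1 : ZMod 2) else 0).rank ≤ 2 * k := by
  set x : Fin k → Fin n → ZMod 2 := fun i u => if u ∈ (B i).1 then 1 else 0 with hx
  set y : Fin k → Fin n → ZMod 2 := fun i u => if u ∈ (B i).2 then 1 else 0 with hy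
  have hM : (Matrix.of fun u v : Fin n => if G.Adj u v then (1 : ZMod 2) else 0)
      = ∑ i : Fin k, (Matrix.vecMulVec (x i) (y i) + Matrix.vecMulVec (y i) (x i)) := by
    ext u v
    rw [Matrix.sum_apply]
    simp only [Matrix.add_apply, Matrix.vecMulVec_apply, Matrix.of_apply]
    by_cases huv : u = v
    · subst huv
      rw [if_neg (G.irrefl)]
      rw [Finset.sum_eq_zero]
      intro i _
      rw [mul_comm (y i u) (x i u)]
      exact CharTwo.add_self_eq_zero _
    · have hterm : ∀ i : Fin k, x i u * y i v + y i u * x i v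
          = if ((u ∈ (B i).1 ∧ v ∈ (B i).2) ∨ (u ∈ (B i).2 ∧ v ∈ (B i).1)) then (1 : ZMod 2)
            else 0 := by
        intro i
        have hd := hB.1 i
        by_cases h1 : u ∈ (B i).1 <;> by_cases h2 : v ∈ (B i).2 <;>
          by_cases h3 : u ∈ (B i).2 <;> by_cases h4 : v ∈ (B i).1 <;>
          first
            | exact absurd h3 (Finset.disjoint_left.mp hd h1)
            | exact absurd h2 (Finset.disjoint_right.mp hd h4)
            | simp [hx, hy, h1, h2, h3, h4]
      rw [Finset.sum_congr rfl (fun i _ => hterm i)]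
      exact (myBoole (G.Adj u v) _ _ _ (hB.2 u v huv)).symm
  rw [hM]
  calc (∑ i : Fin k, (Matrix.vecMulVec (x i) (y i) + Matrix.vecMulVec (y i) (x i))).rank
      ≤ ∑ i : Fin k, (Matrix.vecMulVec (x i) (y i) + Matrix.vecMulVec (y i) (x i)).rank :=
        myRankSumLe _ _
    _ ≤ ∑ _i : Fin k, 2 := by
        refine Finset.sum_le_sum fun i _ => ?_
        exact le_trans (myRankAddLe _ _)
          (add_le_add (myRankVecMulVecLe _ _) (myRankVecMulVecLe _ _))
    _ = 2 * k := by simp [mul_comm]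

/-- The first `2⌊n/2⌋` columns of the path adjacency matrix are independent over `𝔽₂`. -/
lemma path_rank_lower (n : ℕ) :
    2 * (n / 2) ≤
      (Matrix.of fun u v : Fin n => if (pathGraphN n).Adj u v then (1 : ZMod 2) else 0).rank := by
  set m := 2 * (n / 2) with hm
  have hmn : m ≤ n := by omega
  set M := (Matrix.of fun u v : Fin n => if (pathGraphN n).Adj u v then (1 : ZMod 2) else 0)
    with hMdef
  set v : Fin m → (Fin n → ZMod 2) := fun j i => M i (Fin.castLE hmn j) with hv
  have hindep : LinearIndependent (ZMod 2) v := by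
    rw [Fintype.linearIndependent_iff]
    intro g hg j0
    set G : ℕ → ZMod 2 := fun c => if h : c < m then g ⟨c, h⟩ else 0 with hG
    have htop : ∀ c, m ≤ c → G c = 0 := by
      intro c hc
      simp [hG, Nat.not_lt.mpr hc]
    have sum_single : ∀ c : ℕ, (∑ j : Fin m, if (j : ℕ) = c then g j else 0) = G c := by
      intro c
      by_cases h : c < m
      · have he : ∀ j : Fin m, ((j : ℕ) = c) ↔ (j = ⟨c, h⟩) := by
          intro j
          constructor
          · intro e; exact Fin.ext e
          · intro e; rw [e]
        simp only [he]
        rw [Finset.sum_ite_eq' Finset.univ (⟨c, h⟩ : Fin m) g, if_pos (Finset.mem_univ _)]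
        simp [hG, h]
      · rw [Finset.sum_eq_zero, eq_comm]
        · simp [hG, h]
        · intro j _
          rw [if_neg]
          have := j.isLt
          omega
    have hE : ∀ r : ℕ, r < n →
        G (r + 1) + (if r = 0 then 0 else G (r - 1)) = 0 := by
      intro r hr
      have hrow := congrFun hg ⟨r, hr⟩
      rw [Finset.sum_apply] at hrow
      simp only [Pi.smul_apply, smul_eq_mul, Pi.zero_apply] at hrow
      have hterm : ∀ j : Fin m, g j * v j ⟨r, hr⟩
          = (if (j : ℕ) = r + 1 then g j else 0)
            + (if (r ≠ 0 ∧ (j : ℕ) = r - 1) then g j else 0) := by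
        intro j
        have hval : v j ⟨r, hr⟩ =
            if (r + 1 = (j : ℕ) ∨ (j : ℕ) + 1 = r) then (1 : ZMod 2) else 0 := by
          simp only [hv, hMdef, Matrix.of_apply, pathAdj]
          rfl
        rw [hval]
        by_cases h1 : r + 1 = (j : ℕ)
        · rw [if_pos (Or.inl h1), if_pos (by omega), if_neg (by omega), mul_one, add_zero]
        · by_cases h2 : (j : ℕ) + 1 = r
          · rw [if_pos (Or.inr h2), if_neg (by omega), if_pos (by omega), mul_one, zero_add]
          · rw [if_neg (by omega), if_neg (by omega), if_neg (by omega), mul_zero, add_zero]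
      rw [Finset.sum_congr rfl (fun j _ => hterm j), Finset.sum_add_distrib,
        sum_single] at hrow
      by_cases hr0 : r = 0
      · rw [if_pos hr0]
        rw [show (∑ j : Fin m, if (r ≠ 0 ∧ (j : ℕ) = r - 1) then g j else 0) = 0 from
          Finset.sum_eq_zero (fun j _ => if_neg (by omega))] at hrow
        exact hrow
      · rw [if_neg hr0]
        rw [show (∑ j : Fin m, if (r ≠ 0 ∧ (j : ℕ) = r - 1) then g j else 0)
            = ∑ j : Fin m, if (j : ℕ) = r - 1 then g j else 0 from
          Finset.sum_congr rfl (fun j _ => by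
            by_cases h : (j : ℕ) = r - 1
            · rw [if_pos ⟨hr0, h⟩, if_pos h]
            · rw [if_neg (by tauto), if_neg h]), sum_single] at hrow
        exact hrow
    have hm0 : 0 < m := by
      have := j0.isLt
      omega
    have hn0 : 0 < n := lt_of_lt_of_le hm0 hmn
    have hstep : ∀ r : ℕ, r + 2 ≤ n → G r = G (r + 2) := by
      intro r hr
      have h := hE (r + 1) (by omega)
      rw [if_neg (by omega)] at h
      have h' : G (r + 1 + 1) = - G (r + 1 - 1) := eq_neg_of_add_eq_zero_left h
      rw [CharTwo.neg_eq] at h'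
      have e1 : r + 1 + 1 = r + 2 := by omega
      have e2 : r + 1 - 1 = r := by omega
      rw [e1, e2] at h'
      exact h'.symm
    have hO : ∀ t : ℕ, 1 + 2 * t < n → G (1 + 2 * t) = 0 := by
      intro t
      induction t with
      | zero =>
        intro _
        have h := hE 0 hn0
        rw [if_pos rfl, add_zero] at h
        simpa using h
      | succ t ih =>
        intro ht
        have e : 1 + 2 * (t + 1) = (1 + 2 * t) + 2 := by omega
        rw [e, ← hstep (1 + 2 * t) (by omega)]
        exact ih (by omega)
    have hGn1 : G (n - 1) = 0 := by
      rcases Nat.even_or_odd n with he | ho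
      · -- n even : n - 1 is odd, use the odd chain
        have hn2 : 2 ≤ n := by
          rcases he with ⟨t, ht⟩
          omega
        obtain ⟨t, ht⟩ : ∃ t, n - 1 = 1 + 2 * t := by
          rcases he with ⟨s, hs⟩
          exact ⟨s - 1, by omega⟩
        rw [ht]
        exact hO t (by omega)
      · -- n odd : m = n - 1
        apply htop
        rcases ho with ⟨s, hs⟩
        omega
    have hall : ∀ d : ℕ, d ≤ n - 1 → G (n - 1 - d) = 0 := by
      intro d
      induction d using Nat.strong_induction_on with
      | _ d ih =>
        intro hd
        rcases Nat.lt_or_ge d 2 with h2 | h2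
        · interval_cases d
          · simpa using hGn1
          · -- d = 1 : G (n-2) = 0 from row n-1
            have hn2 : 2 ≤ n := by omega
            have h := hE (n - 1) (by omega)
            rw [if_neg (by omega)] at h
            rw [show n - 1 + 1 = n from by omega] at h
            rw [htop n (by omega), zero_add] at h
            rw [show n - 1 - 1 = n - 2 from by omega]
            rw [show n - 1 - 1 = n - 2 from by omega] at h
            exact h
        · have e : n - 1 - (d - 2) = (n - 1 - d) + 2 := by omega
          have h := ih (d - 2) (by omega) (by omega)
          rw [e] at h
          rw [hstep (n - 1 - d) (by omega)]
          exact h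
    have hj : g j0 = G (j0 : ℕ) := by
      simp [hG, j0.isLt]
    rw [hj, show (j0 : ℕ) = n - 1 - (n - 1 - (j0 : ℕ)) from by
      have := j0.isLt; omega]
    exact hall _ (by omega)
  have hrange : ∀ j, v j ∈ LinearMap.range M.mulVecLin := by
    intro j
    refine ⟨Pi.single (Fin.castLE hmn j) 1, ?_⟩
    rw [Matrix.mulVecLin_apply, Matrix.mulVec_single]
    funext i
    rw [MulOpposite.op_one, one_smul]; rfl
  have hspan : Submodule.span (ZMod 2) (Set.range v) ≤ LinearMap.range M.mulVecLin :=
    Submodule.span_le.mpr (Set.range_subset_iff.mpr hrange)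
  have h1 : finrank (ZMod 2) (Submodule.span (ZMod 2) (Set.range v)) = m := by
    rw [finrank_span_eq_card hindep, Fintype.card_fin]
  calc m = finrank (ZMod 2) (Submodule.span (ZMod 2) (Set.range v)) := h1.symm
    _ ≤ finrank (ZMod 2) (LinearMap.range M.mulVecLin) := Submodule.finrank_mono hspan
    _ = M.rank := rfl

/-! ### The star construction -/

/-- The center of the `i`-th star: vertex `2i+1`. -/
def pc (n : ℕ) (i : Fin (n / 2)) : Fin n :=
  ⟨2 * (i : ℕ) + 1, by have := i.isLt; omega⟩

/-- The `i`-th biclique: the star centered at `2i+1` together with its neighbors. -/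
noncomputable def pB (n : ℕ) (i : Fin (n / 2)) : Finset (Fin n) × Finset (Fin n) :=
  ({pc n i}, Finset.univ.filter fun w => (pathGraphN n).Adj (pc n i) w)

lemma pB_cond_iff {n : ℕ} (u v : Fin n) (i : Fin (n / 2)) :
    ((u ∈ (pB n i).1 ∧ v ∈ (pB n i).2) ∨ (u ∈ (pB n i).2 ∧ v ∈ (pB n i).1))
      ↔ ((u = pc n i ∧ (pathGraphN n).Adj u v) ∨ (v = pc n i ∧ (pathGraphN n).Adj v u)) := by
  simp only [pB, Finset.mem_singleton, Finset.mem_filter, Finset.mem_univ, true_and]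
  constructor
  · rintro (⟨rfl, h⟩ | ⟨h, rfl⟩)
    · exact Or.inl ⟨rfl, h⟩
    · exact Or.inr ⟨rfl, h⟩
  · rintro (⟨rfl, h⟩ | ⟨rfl, h⟩)
    · exact Or.inl ⟨rfl, h⟩
    · exact Or.inr ⟨h, rfl⟩

lemma pB_filter_single {n : ℕ} (u v : Fin n) (huv : (u : ℕ) + 1 = (v : ℕ)) :
    ∃ t : Fin (n / 2), (Finset.univ.filter (fun i : Fin (n / 2) =>
      (u ∈ (pB n i).1 ∧ v ∈ (pB n i).2) ∨ (u ∈ (pB n i).2 ∧ v ∈ (pB n i).1))) = {t} := by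
  have hAdj : (pathGraphN n).Adj u v := (pathAdj u v).mpr (Or.inl huv)
  have hvlt := v.isLt
  rcases Nat.even_or_odd (u : ℕ) with he | ho
  · -- u even, so v = u+1 is odd; center is v
    have he' : (u : ℕ) % 2 = 0 := Nat.even_iff.mp he
    refine ⟨⟨(v : ℕ) / 2, by omega⟩, ?_⟩
    ext i
    simp only [Finset.mem_filter, Finset.mem_univ, true_and, Finset.mem_singleton,
      pB_cond_iff]
    constructor
    · rintro (⟨hu, -⟩ | ⟨hv, -⟩)
      · exfalso
        have : (u : ℕ) = 2 * (i : ℕ) + 1 := by rw [hu]; rfl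
        omega
      · have : (v : ℕ) = 2 * (i : ℕ) + 1 := by rw [hv]; rfl
        apply Fin.ext
        simp [pc]
        omega
    · rintro rfl
      refine Or.inr ⟨?_, hAdj.symm⟩
      apply Fin.ext
      show (v : ℕ) = 2 * ((v : ℕ) / 2) + 1
      omega
  · -- u odd; center is u
    have ho' : (u : ℕ) % 2 = 1 := Nat.odd_iff.mp ho
    refine ⟨⟨(u : ℕ) / 2, by omega⟩, ?_⟩
    ext i
    simp only [Finset.mem_filter, Finset.mem_univ, true_and, Finset.mem_singleton,
      pB_cond_iff]
    constructor
    · rintro (⟨hu, -⟩ | ⟨hv, -⟩)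
      · have : (u : ℕ) = 2 * (i : ℕ) + 1 := by rw [hu]; rfl
        apply Fin.ext
        show (i : ℕ) = (u : ℕ) / 2
        omega
      · exfalso
        have : (v : ℕ) = 2 * (i : ℕ) + 1 := by rw [hv]; rfl
        omega
    · rintro rfl
      refine Or.inl ⟨?_, hAdj⟩
      apply Fin.ext
      show (u : ℕ) = 2 * ((u : ℕ) / 2) + 1
      omega

lemma oddCover_exists (n : ℕ) : IsOddCover (pathGraphN n) (pB n) := by
  constructor
  · intro i
    rw [pB, Finset.disjoint_singleton_left]
    simp only [Finset.mem_filter, Finset.mem_univ, true_and]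
    exact (pathGraphN n).irrefl
  · intro u v huv
    by_cases hA : (pathGraphN n).Adj u v
    · have hfil : ∃ t : Fin (n / 2), (Finset.univ.filter (fun i : Fin (n / 2) =>
          (u ∈ (pB n i).1 ∧ v ∈ (pB n i).2) ∨ (u ∈ (pB n i).2 ∧ v ∈ (pB n i).1))) = {t} := by
        rcases (pathAdj u v).mp hA with h | h
        · exact pB_filter_single u v h
        · obtain ⟨t, ht⟩ := pB_filter_single v u h
          refine ⟨t, ?_⟩
          rw [← ht]
          apply Finset.filter_congr
          intro i _
          constructor
          · rintro (h1 | h2)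
            · exact Or.inr (And.intro h1.2 h1.1)
            · exact Or.inl (And.intro h2.2 h2.1)
          · rintro (h1 | h2)
            · exact Or.inr (And.intro h1.2 h1.1)
            · exact Or.inl (And.intro h2.2 h2.1)
      obtain ⟨t, ht⟩ := hfil
      simp only [hA, true_iff]
      have hOddMine : Odd (Finset.univ.filter (fun i : Fin (n / 2) =>
          (u ∈ (pB n i).1 ∧ v ∈ (pB n i).2) ∨ (u ∈ (pB n i).2 ∧ v ∈ (pB n i).1))).card := by
        rw [ht, Finset.card_singleton]
        exact odd_one
      exact (myOddCardCongr _ _ _ _).mpr hOddMine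
    · have hfil : (Finset.univ.filter (fun i : Fin (n / 2) =>
          (u ∈ (pB n i).1 ∧ v ∈ (pB n i).2) ∨ (u ∈ (pB n i).2 ∧ v ∈ (pB n i).1))) = ∅ := by
        apply Finset.filter_eq_empty_iff.mpr
        intro i _
        rw [pB_cond_iff]
        rintro (⟨rfl, h⟩ | ⟨rfl, h⟩)
        · exact hA h
        · exact hA h.symm
      simp only [hA, false_iff]
      intro hcontra
      have hOddMine : Odd (Finset.univ.filter (fun i : Fin (n / 2) =>
          (u ∈ (pB n i).1 ∧ v ∈ (pB n i).2) ∨ (u ∈ (pB n i).2 ∧ v ∈ (pB n i).1))).card :=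
        (myOddCardCongr _ _ _ _).mp hcontra
      rw [hfil] at hOddMine
      simp at hOddMine
    
theorem stmt11 (n : ℕ) (hn : 0 < n) : b2 (pathGraphN n) = n / 2 := by
  have hmem : (n / 2) ∈ {k : ℕ | ∃ B : Fin k → Finset (Fin n) × Finset (Fin n),
      IsOddCover (pathGraphN n) B} := ⟨pB n, oddCover_exists n⟩
  refine le_antisymm (Nat.sInf_le hmem) (le_csInf ⟨_, hmem⟩ ?_)
  rintro k ⟨B, hB⟩
  have h1 := path_rank_lower n
  have h2 := rank_le_of_oddCover (pathGraphN n) B hB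
  omega
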